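/- For any sponsored-shopping position auction with the GSP payment rule, every autobidding equilibrium (α, π) achieves expected social welfare at least half the optimum: Wel(π) ≥ (1/2)·Wel^opt. -/

import Mathlib

open Finset MeasureTheory

namespace SponsoredShopping

noncomputable section

/-- An item is a pair `(i, j)`: bidder `i`'s `j`-th item. -/
abbrev Item (n m : ℕ) : Type := Fin n × Fin m

/-- An allocation assigns to each rank `k` (0-based) an item. -/
abbrev Alloc (n m : ℕ) : Type := Fin (n * m) ≃ Item n m

/-- Maximum of `f` over a finite set, with value `0` on the empty set. -/
def fmax {ι : Type*} (s : Finset ι) (f : ι → ℝ) : ℝ :=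
  WithBot.unbotD 0 (s.sup fun i => (f i : WithBot ℝ))

variable {n m : ℕ}

/-- An allocation is valid under bids `b` if bids are nonincreasing along ranks. -/
def ValidUnder (b : Item n m → ℝ) (a : Alloc n m) : Prop :=
  ∀ k k' : Fin (n * m), k ≤ k' → b (a k') ≤ b (a k)

/-- The value of bidder `i` under allocation `a`
(`c k` is the CTR of slot `k`, with `c k = 0` for `k ≥ K`). -/
def bidderValue (c : ℕ → ℝ) (v : Item n m → ℝ) (a : Alloc n m) (i : Fin n) : ℝ :=
  ∑ k : Fin (n * m), if (a k).1 = i then c k * v (a k) else 0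

/-- Social welfare of an allocation. -/
def wel (c : ℕ → ℝ) (v : Item n m → ℝ) (a : Alloc n m) : ℝ :=
  ∑ k : Fin (n * m), c k * v (a k)

/-- Optimal social welfare. -/
def welOpt (c : ℕ → ℝ) (v : Item n m → ℝ) : ℝ :=
  fmax (univ : Finset (Alloc n m)) (wel c v)

/-- GSP per-click price of the item ranked `k`: highest bid among lower-ranked
items belonging to other bidders (`0` if none). -/
def gspPrice (b : Item n m → ℝ) (a : Alloc n m) (k : Fin (n * m)) : ℝ :=
  fmax (univ.filter fun k' : Fin (n * m) => k < k' ∧ (a k').1 ≠ (a k).1)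
    (fun k' => b (a k'))

/-- Total GSP payment of bidder `i`. -/
def gspPay (c : ℕ → ℝ) (b : Item n m → ℝ) (a : Alloc n m) (i : Fin n) : ℝ :=
  ∑ k : Fin (n * m), if (a k).1 = i then c k * gspPrice b a k else 0

/-- Bid-welfare of an allocation. -/
def bidWelfare (c : ℕ → ℝ) (b : Item n m → ℝ) (a : Alloc n m) : ℝ :=
  ∑ k : Fin (n * m), c k * b (a k)

/-- Bids with bidder `i`'s bids zeroed out. -/
def exclBids (b : Item n m → ℝ) (i : Fin n) : Item n m → ℝ :=
  fun x => if x.1 = i then 0 else b x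

/-- Bid-welfare obtained by bidders other than `i` in allocation `a`. -/
def othersWelfare (c : ℕ → ℝ) (b : Item n m → ℝ) (a : Alloc n m) (i : Fin n) : ℝ :=
  ∑ k : Fin (n * m), if (a k).1 ≠ i then c k * b (a k) else 0

/-- Optimal counterfactual bid-welfare without bidder `i`. -/
def woptWithout (c : ℕ → ℝ) (b : Item n m → ℝ) (i : Fin n) : ℝ :=
  fmax (univ : Finset (Alloc n m)) (fun a' => bidWelfare c (exclBids b i) a')

/-- VCG payment of bidder `i`. -/
def vcgPay (c : ℕ → ℝ) (b : Item n m → ℝ) (a : Alloc n m) (i : Fin n) : ℝ :=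
  woptWithout c b i - othersWelfare c b a i

/-- The two mechanisms considered. -/
inductive Mech | gsp | vcg

/-- Payment of bidder `i` under mechanism `M`. -/
def pay : Mech → (ℕ → ℝ) → (Item n m → ℝ) → Alloc n m → Fin n → ℝ
  | .gsp => gspPay
  | .vcg => vcgPay

/-- `S_k(a)`: the set of items assigned to the first `k` slots in `a`. -/
def topk (a : Alloc n m) (k : ℕ) : Finset (Item n m) :=
  (univ.filter fun r : Fin (n * m) => (r : ℕ) < k).image a

/-! ### Auxiliary lemmas -/

lemma coe_le_unbot' {r : ℝ} {x : WithBot ℝ} (h : (r : WithBot ℝ) ≤ x) : r ≤ WithBot.unbotD 0 x := by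
  cases x with
  | bot => simp at h
  | coe y => simpa using h

lemma le_fmax {ι : Type*} {s : Finset ι} {f : ι → ℝ} {i : ι} (hi : i ∈ s) : f i ≤ fmax s f :=
  coe_le_unbot' (Finset.le_sup (f := fun i => (f i : WithBot ℝ)) hi)

lemma fmax_nonneg {ι : Type*} {s : Finset ι} {f : ι → ℝ}
    (h : ∀ i ∈ s, 0 ≤ f i) : 0 ≤ fmax s f := by
  rcases s.eq_empty_or_nonempty with rfl | ⟨i, hi⟩
  · simp [fmax]
  · exact (h i hi).trans (le_fmax hi)

lemma fmax_le {ι : Type*} {s : Finset ι} {f : ι → ℝ} {M : ℝ} (hM : 0 ≤ M)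
    (h : ∀ i ∈ s, f i ≤ M) : fmax s f ≤ M := by
  have hsup : s.sup (fun i => (f i : WithBot ℝ)) ≤ (M : WithBot ℝ) :=
    Finset.sup_le fun i hi => WithBot.coe_le_coe.mpr (h i hi)
  rw [fmax]
  cases hx : s.sup (fun i => (f i : WithBot ℝ)) with
  | bot => simpa using hM
  | coe y => rw [hx] at hsup; simpa using hsup

lemma sum_bidderValue (c : ℕ → ℝ) (v : Item n m → ℝ) (a : Alloc n m) :
    ∑ i : Fin n, bidderValue c v a i = wel c v a := by
  unfold bidderValue wel
  rw [Finset.sum_comm]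
  refine Finset.sum_congr rfl fun k _ => ?_
  simp

lemma sum_gspPay (c : ℕ → ℝ) (b : Item n m → ℝ) (a : Alloc n m) :
    ∑ i : Fin n, gspPay c b a i = ∑ k : Fin (n * m), c k * gspPrice b a k := by
  unfold gspPay
  rw [Finset.sum_comm]
  refine Finset.sum_congr rfl fun k _ => ?_
  simp

/-- Key pointwise lemma: for any allocation valid under the induced bids,
the optimal welfare is at most the welfare of the allocation plus total GSP payments. -/
lemma welOpt_le_wel_add_pay
    (v : Item n m → ℝ) (c : ℕ → ℝ) (α : Fin n → ℝ)
    (hv : ∀ x, 0 ≤ v x) (hc0 : ∀ k, 0 ≤ c k) (hcmono : Antitone c)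
    (hα1 : ∀ i, 1 ≤ α i)
    (a : Alloc n m) (ha : ValidUnder (fun x => α x.1 * v x) a) :
    welOpt c v ≤ wel c v a + ∑ i : Fin n, gspPay c (fun x => α x.1 * v x) a i := by
  classical
  have hvb : ∀ x : Item n m, v x ≤ α x.1 * v x := fun x =>
    le_mul_of_one_le_left (hv x) (hα1 x.1)
  have hb0 : ∀ x : Item n m, 0 ≤ α x.1 * v x := fun x =>
    mul_nonneg (zero_le_one.trans (hα1 x.1)) (hv x)
  -- sorting permutation: sort ranks of `a` by value (descending), ties by rank of `a`
  set f : Fin (n * m) → ℝ ×ₗ Fin (n * m) := fun r => toLex (-(v (a r)), r) with hf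
  set σ : Equiv.Perm (Fin (n * m)) := Tuple.sort f with hσdef
  have hmono : Monotone (f ∘ σ) := Tuple.monotone_sort f
  have hkey : ∀ k k' : Fin (n * m), k ≤ k' →
      v (a (σ k')) ≤ v (a (σ k)) ∧ (v (a (σ k)) ≤ v (a (σ k')) → σ k ≤ σ k') := by
    intro k k' hkk
    have h := hmono hkk
    simp only [hf, Function.comp_apply, Prod.Lex.le_iff, ofLex_toLex] at h
    constructor
    · rcases h with h | h
      · linarith
      · have := neg_injective h.1
        linarith
    · intro hvv
      rcases h with h | h
      · exfalso; linarith
      · exact h.2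
  -- the canonical optimal allocation
  have haσ : ∀ k, (σ.trans a) k = a (σ k) := fun k => rfl
  -- Step 1: `σ.trans a` is welfare-optimal
  have hopt : ∀ a'' : Alloc n m, wel c v a'' ≤ wel c v (σ.trans a) := by
    intro a''
    have hmv : Monovary (fun k : Fin (n * m) => c k) (fun k => v (a (σ k))) := by
      intro i j hij
      rcases le_total i j with h | h
      · exact absurd hij (not_lt.mpr ((hkey i j h).1))
      · exact hcmono (by exact_mod_cast h)
    have h2 := hmv.sum_mul_comp_perm_le_sum_mul (σ := a''.trans (σ.trans a).symm)
    have e : ∀ k : Fin (n * m), v (a'' k) = v (a (σ ((a''.trans (σ.trans a).symm) k))) := by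
      intro k
      congr 1
      simp [Equiv.trans_apply]
    calc wel c v a''
        = ∑ k : Fin (n * m), c k * v (a (σ ((a''.trans (σ.trans a).symm) k))) := by
          unfold wel; exact Finset.sum_congr rfl fun k _ => by rw [e k]
      _ ≤ ∑ k : Fin (n * m), c k * v (a (σ k)) := h2
      _ = wel c v (σ.trans a) := by
          unfold wel; exact Finset.sum_congr rfl fun k _ => by rw [haσ]
  -- Step 2: the charging argument
  set P : Fin (n * m) → Prop := fun k => σ k ≤ k with hP
  set Q : Fin (n * m) → Prop := fun k => (a (σ k)).1 ≠ (a k).1 with hQ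
  set SA := Finset.univ.filter P with hSA
  set SB := (Finset.univ.filter fun k => ¬ P k).filter Q with hSB
  set SC := (Finset.univ.filter fun k => ¬ P k).filter (fun k => ¬ Q k) with hSC
  have hsplit : ∑ k : Fin (n * m), c k * v (a (σ k))
      = (∑ k ∈ SA, c k * v (a (σ k)))
        + ((∑ k ∈ SB, c k * v (a (σ k))) + (∑ k ∈ SC, c k * v (a (σ k)))) := by
    rw [hSB, hSC, Finset.sum_filter_add_sum_filter_not, hSA,
      Finset.sum_filter_add_sum_filter_not]
  -- case A
  have hA : ∑ k ∈ SA, c k * v (a (σ k)) ≤ ∑ ρ ∈ SA.image σ, c ρ * v (a ρ) := by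
    rw [Finset.sum_image (fun x _ y _ hxy => σ.injective hxy)]
    refine Finset.sum_le_sum fun k hk => ?_
    have hk' : σ k ≤ k := (Finset.mem_filter.mp hk).2
    exact mul_le_mul_of_nonneg_right (hcmono (by exact_mod_cast hk')) (hv _)
  -- case C (same owner, optimal item sits lower): use validity and same-owner scaling
  have hsameC : ∀ k : Fin (n * m), k < σ k → (a (σ k)).1 = (a k).1 →
      v (a (σ k)) ≤ v (a k) := by
    intro k hlt heq
    have hble : α (a (σ k)).1 * v (a (σ k)) ≤ α (a k).1 * v (a k) := ha k (σ k) hlt.le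
    rw [heq] at hble
    have hαpos : (0:ℝ) < α (a k).1 := zero_lt_one.trans_le (hα1 _)
    exact le_of_mul_le_mul_left hble hαpos
  have hC : ∑ k ∈ SC, c k * v (a (σ k)) ≤ ∑ k ∈ SC, c k * v (a k) := by
    refine Finset.sum_le_sum fun k hk => ?_
    have hk1 := (Finset.mem_filter.mp hk).2
    have hk2 := (Finset.mem_filter.mp (Finset.mem_filter.mp hk).1).2
    have hlt : k < σ k := not_le.mp hk2
    have heq : (a (σ k)).1 = (a k).1 := not_not.mp hk1
    exact mul_le_mul_of_nonneg_left (hsameC k hlt heq) (hc0 k)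
  -- disjointness of the charged ranks
  have hdisj : Disjoint (SA.image σ) SC := by
    rw [Finset.disjoint_left]
    intro ρ hρA hρC
    obtain ⟨k₁, hk₁, hσk₁⟩ := Finset.mem_image.mp hρA
    have hk₁' : σ k₁ ≤ k₁ := (Finset.mem_filter.mp hk₁).2
    have hρ1 := (Finset.mem_filter.mp hρC).2
    have hρ2 := (Finset.mem_filter.mp (Finset.mem_filter.mp hρC).1).2
    have hlt' : ρ < σ ρ := not_le.mp hρ2
    have heq' : (a (σ ρ)).1 = (a ρ).1 := not_not.mp hρ1
    have hle : ρ ≤ k₁ := hσk₁ ▸ hk₁'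
    have hρk₁ : ρ < k₁ := by
      refine lt_of_le_of_ne hle fun h => ?_
      rw [← h] at hσk₁
      exact absurd hσk₁ hlt'.ne'
    -- value of a ρ equals value of the optimal item at rank k₁
    have h1 : v (a ρ) ≤ v (a (σ ρ)) := by
      have := (hkey ρ k₁ hρk₁.le).1
      rwa [hσk₁] at this
    have h2 : v (a (σ ρ)) ≤ v (a ρ) := hsameC ρ hlt' heq'
    have h3 : σ ρ ≤ σ k₁ := (hkey ρ k₁ hρk₁.le).2 (by rw [hσk₁]; exact h2)
    rw [hσk₁] at h3
    exact absurd h3 (not_le.mpr hlt')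
  have hAC : (∑ ρ ∈ SA.image σ, c ρ * v (a ρ)) + ∑ k ∈ SC, c k * v (a k)
      ≤ wel c v a := by
    rw [← Finset.sum_union hdisj]
    unfold wel
    exact Finset.sum_le_sum_of_subset_of_nonneg (Finset.subset_univ _)
      (fun k _ _ => mul_nonneg (hc0 k) (hv _))
  -- case B (other owner, optimal item sits lower): charge the GSP price
  have hB : ∑ k ∈ SB, c k * v (a (σ k))
      ≤ ∑ k : Fin (n * m), c k * gspPrice (fun x => α x.1 * v x) a k := by
    refine le_trans (Finset.sum_le_sum fun k hk => ?_)
      (Finset.sum_le_sum_of_subset_of_nonneg (Finset.subset_univ _)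
        (fun k _ _ => mul_nonneg (hc0 k) (fmax_nonneg fun k' _ => hb0 (a k'))))
    have hk1 : Q k := (Finset.mem_filter.mp hk).2
    have hk2 := (Finset.mem_filter.mp (Finset.mem_filter.mp hk).1).2
    have hlt : k < σ k := not_le.mp hk2
    have hmem : σ k ∈ Finset.univ.filter
        fun k' : Fin (n * m) => k < k' ∧ (a k').1 ≠ (a k).1 := by
      simp only [Finset.mem_filter, Finset.mem_univ, true_and]
      exact ⟨hlt, hk1⟩
    have hle : α (a (σ k)).1 * v (a (σ k)) ≤ gspPrice (fun x => α x.1 * v x) a k :=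
      le_fmax (f := fun k' => α (a k').1 * v (a k')) hmem
    exact mul_le_mul_of_nonneg_left ((hvb _).trans hle) (hc0 k)
  -- combine
  have hstep2 : wel c v (σ.trans a)
      ≤ wel c v a + ∑ k : Fin (n * m), c k * gspPrice (fun x => α x.1 * v x) a k := by
    have : wel c v (σ.trans a) = ∑ k : Fin (n * m), c k * v (a (σ k)) := by
      unfold wel; exact Finset.sum_congr rfl fun k _ => by rw [haσ]
    rw [this, hsplit]
    linarith
  have hwopt : welOpt c v ≤ wel c v (σ.trans a) := by
    refine fmax_le ?_ fun a'' _ => hopt a''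
    exact Finset.sum_nonneg fun k _ => mul_nonneg (hc0 k) (hv _)
  rw [sum_gspPay]
  linarith

/-- Price of Anarchy for GSP: every autobidding equilibrium has expected social
welfare at least half the optimum. -/
theorem gsp_price_of_anarchy
    (n m K : ℕ) (v : Item n m → ℝ) (c : ℕ → ℝ) (A : ℝ)
    (hv : ∀ x : Item n m, 0 ≤ v x)
    (hvmono : ∀ (i : Fin n) (j j' : Fin m), j ≤ j' → v (i, j') ≤ v (i, j))
    (hc1 : c 0 ≤ 1) (hc0 : ∀ k, 0 ≤ c k) (hcmono : Antitone c)
    (hcK : ∀ k, K ≤ k → c k = 0)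
    (hA : 1 ≤ A)
    (α : Fin n → ℝ) (hα : ∀ i, α i ∈ Set.Icc 1 A)
    (π : Alloc n m → ℝ) (hπ0 : ∀ a, 0 ≤ π a) (hπ1 : ∑ a : Alloc n m, π a = 1)
    (hsupp : ∀ a : Alloc n m, 0 < π a → ValidUnder (fun x => α x.1 * v x) a)
    (hroi : ∀ i : Fin n,
      ∑ a : Alloc n m, π a * gspPay c (fun x => α x.1 * v x) a i
        ≤ ∑ a : Alloc n m, π a * bidderValue c v a i)
    (hmaximal : ∀ i : Fin n,
      (∑ a : Alloc n m, π a * gspPay c (fun x => α x.1 * v x) a i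
        < ∑ a : Alloc n m, π a * bidderValue c v a i) → α i = A) :
    (1 / 2) * welOpt c v ≤ ∑ a : Alloc n m, π a * wel c v a := by
  classical
  have hα1 : ∀ i, 1 ≤ α i := fun i => (hα i).1
  have key : ∀ a : Alloc n m, 0 < π a →
      welOpt c v ≤ wel c v a + ∑ i : Fin n, gspPay c (fun x => α x.1 * v x) a i :=
    fun a hπa => welOpt_le_wel_add_pay v c α hv hc0 hcmono hα1 a (hsupp a hπa)
  have h1 : welOpt c v
      ≤ ∑ a : Alloc n m, π a * (wel c v a + ∑ i : Fin n, gspPay c (fun x => α x.1 * v x) a i) := by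
    calc welOpt c v = ∑ a : Alloc n m, π a * welOpt c v := by
          rw [← Finset.sum_mul, hπ1, one_mul]
      _ ≤ _ := by
          refine Finset.sum_le_sum fun a _ => ?_
          rcases eq_or_lt_of_le (hπ0 a) with h | h
          · rw [← h]; simp
          · exact mul_le_mul_of_nonneg_left (key a h) h.le
  have h2 : ∑ a : Alloc n m, π a * (wel c v a + ∑ i : Fin n, gspPay c (fun x => α x.1 * v x) a i)
      = (∑ a : Alloc n m, π a * wel c v a)
        + ∑ i : Fin n, ∑ a : Alloc n m, π a * gspPay c (fun x => α x.1 * v x) a i := by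
    have e : ∀ a : Alloc n m,
        π a * (wel c v a + ∑ i : Fin n, gspPay c (fun x => α x.1 * v x) a i)
          = π a * wel c v a + ∑ i : Fin n, π a * gspPay c (fun x => α x.1 * v x) a i :=
      fun a => by rw [mul_add, Finset.mul_sum]
    rw [Finset.sum_congr rfl fun a _ => e a, Finset.sum_add_distrib, Finset.sum_comm]
  have h3 : ∑ i : Fin n, ∑ a : Alloc n m, π a * gspPay c (fun x => α x.1 * v x) a i
      ≤ ∑ i : Fin n, ∑ a : Alloc n m, π a * bidderValue c v a i :=
    Finset.sum_le_sum fun i _ => hroi i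
  have h4 : ∑ i : Fin n, ∑ a : Alloc n m, π a * bidderValue c v a i
      = ∑ a : Alloc n m, π a * wel c v a := by
    rw [Finset.sum_comm]
    refine Finset.sum_congr rfl fun a _ => ?_
    rw [← Finset.mul_sum, sum_bidderValue]
  linarith

end
end SponsoredShopping
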